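/- Let 0 < r′ < s′ and suppose there is a constant c > 0 such that r′ < (1/2)·(c·p⁻/(T+1))^{1/p⁺} and s′ > ((T+1)/2)·(c·p⁺)^{1/p⁻}. Assume: (1) for every k ∈ {1,...,T} and every ε > 0 there exists K > 0 such that F(k,t) ≤ ε·|t|^{p⁻} whenever |t| > K; (2) there exist t₁,...,t_T ∈ ℝ with Σ_{k=1}^{T} F(k,t_k) > Σ_{k=1}^{T} sup_{|t|≤s′} F(k,t); (3) for every k ∈ {1,...,T}, sup_{r′≤|t|≤s′} F(k,t) ≤ −Σ_{h≠k} sup_{|t|≤s′} F(h,t). Then there exists λ* > 0 such that E_{λ*} has at least three critical points in H, at least two of which are nonzero. -/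

import Mathlib

/-- μ(u) = Σ_{k=1}^{T+1} (1/p(k−1))|Δu(k−1)|^{p(k−1)}. -/
noncomputable def muF (T : ℕ) (p : ℕ → ℝ) (u : ℕ → ℝ) : ℝ :=
  ∑ k ∈ Finset.Icc 1 (T + 1), (1 / p (k - 1)) * |u k - u (k - 1)| ^ p (k - 1)

/-- F(k,t) = ∫₀ᵗ f(k,τ) dτ. -/
noncomputable def Fint (f : ℕ → ℝ → ℝ) (k : ℕ) (t : ℝ) : ℝ :=
  ∫ τ in (0:ℝ)..t, f k τ

/-- ‖u‖_∞ = max_{1 ≤ k ≤ T} |u(k)| (as the supremum of the corresponding set). -/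
noncomputable def supNorm (T : ℕ) (u : ℕ → ℝ) : ℝ :=
  sSup {x : ℝ | ∃ k, 1 ≤ k ∧ k ≤ T ∧ x = |u k|}

/-- sup_{|t| ≤ σ} F(k,t). -/
noncomputable def supFle (f : ℕ → ℝ → ℝ) (k : ℕ) (σ : ℝ) : ℝ :=
  sSup {y : ℝ | ∃ t : ℝ, |t| ≤ σ ∧ y = Fint f k t}

/-- sup_{ρ ≤ |t| ≤ σ} F(k,t). -/
noncomputable def supFbetween (f : ℕ → ℝ → ℝ) (k : ℕ) (ρ σ : ℝ) : ℝ :=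
  sSup {y : ℝ | ∃ t : ℝ, ρ ≤ |t| ∧ |t| ≤ σ ∧ y = Fint f k t}

/-- r′ = inf{‖u‖_∞ : u ∈ H, μ(u) ≥ r}. -/
noncomputable def rPrime (T : ℕ) (p : ℕ → ℝ) (r : ℝ) : ℝ :=
  sInf {x : ℝ | ∃ u : ℕ → ℝ, u 0 = 0 ∧ u (T + 1) = 0 ∧ r ≤ muF T p u ∧ x = supNorm T u}

/-- s′ = sup{‖u‖_∞ : u ∈ H, μ(u) ≤ s}. -/
noncomputable def sPrime (T : ℕ) (p : ℕ → ℝ) (s : ℝ) : ℝ :=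
  sSup {x : ℝ | ∃ u : ℕ → ℝ, u 0 = 0 ∧ u (T + 1) = 0 ∧ muF T p u ≤ s ∧ x = supNorm T u}

/-- `u ∈ H` is a critical point of `E_λ = μ + λ·J`:
`Σ_{k=1}^{T+1} |Δu(k−1)|^{p(k−1)−2}Δu(k−1)·Δv(k−1) = λ·Σ_{k=1}^{T} f(k,u(k))·v(k)` for all `v ∈ H`. -/
def IsCriticalPoint (T : ℕ) (p : ℕ → ℝ) (f : ℕ → ℝ → ℝ) (lam : ℝ) (u : ℕ → ℝ) : Prop :=
  u 0 = 0 ∧ u (T + 1) = 0 ∧ ∀ v : ℕ → ℝ, v 0 = 0 → v (T + 1) = 0 →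
    ∑ k ∈ Finset.Icc 1 (T + 1),
        |u k - u (k - 1)| ^ (p (k - 1) - 2) * (u k - u (k - 1)) * (v k - v (k - 1))
      = lam * ∑ k ∈ Finset.Icc 1 T, f k (u k) * v k

/-- `u` and `w` are distinct as elements of `H`. -/
def DistinctH (T : ℕ) (u w : ℕ → ℝ) : Prop :=
  ∃ k, 1 ≤ k ∧ k ≤ T ∧ u k ≠ w k

/-- `u ∈ H` is nonzero. -/
def NonzeroH (T : ℕ) (u : ℕ → ℝ) : Prop :=
  ∃ k, 1 ≤ k ∧ k ≤ T ∧ u k ≠ 0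

/-! ### Auxiliary lemmas -/

section AuxLemmas
open Finset

lemma sum_Icc_one (n : ℕ) (F : ℕ → ℝ) :
    ∑ k ∈ Finset.Icc 1 n, F k = ∑ j ∈ Finset.range n, F (j + 1) := by
  induction n with
  | zero => simp
  | succ m ih =>
    rw [Finset.sum_range_succ, ← ih, ← Finset.sum_Icc_succ_top (by omega : 1 ≤ m + 1)]

lemma abel_range (n : ℕ) (b v : ℕ → ℝ) (hv0 : v 0 = 0) (hvn : v (n + 1) = 0) :
    ∑ j ∈ Finset.range (n + 1), b j * (v (j + 1) - v j)
      = ∑ j ∈ Finset.range n, (b j - b (j + 1)) * v (j + 1) := by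
  have h1 : ∑ j ∈ Finset.range (n+1), b j * (v (j+1) - v j)
      = ∑ j ∈ Finset.range (n+1), b j * v (j+1) - ∑ j ∈ Finset.range (n+1), b j * v j := by
    rw [← Finset.sum_sub_distrib]; congr 1; ext j; ring
  rw [h1, Finset.sum_range_succ, hvn, Finset.sum_range_succ' (fun k => b k * v k) n, hv0]
  simp only [mul_zero, add_zero, zero_add]
  rw [← Finset.sum_sub_distrib]
  congr 1; ext j; ring

lemma hasDerivAt_inv_q_abs_rpow {q : ℝ} (hq : 1 < q) (t : ℝ) :
    HasDerivAt (fun s : ℝ => (1/q) * |s| ^ q) (|t| ^ (q - 2) * t) t := by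
  rcases lt_trichotomy t 0 with ht | rfl | ht
  · have h1 : HasDerivAt (fun s : ℝ => (1/q) * (-s) ^ q) ((1/q) * (q * (-t) ^ (q-1) * (-1))) t := by
      have hneg : HasDerivAt (fun s : ℝ => -s) (-1) t := (hasDerivAt_id t).neg
      have := (Real.hasDerivAt_rpow_const (p := q) (Or.inl (by linarith : (-t) ≠ 0))).comp t hneg
      exact this.const_mul (1/q)
    have h2 : (fun s : ℝ => (1/q) * |s| ^ q) =ᶠ[nhds t] (fun s : ℝ => (1/q) * (-s) ^ q) := by
      filter_upwards [Iio_mem_nhds ht] with s hs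
      rw [abs_of_neg hs]
    have h3 : (1/q) * (q * (-t) ^ (q-1) * (-1)) = |t| ^ (q - 2) * t := by
      rw [abs_of_neg ht, show q - 1 = (q-2) + 1 by ring,
        Real.rpow_add (by linarith : (0:ℝ) < -t), Real.rpow_one]
      field_simp
    rw [← h3]
    exact h1.congr_of_eventuallyEq h2
  · -- t = 0
    have hval : (nhds (|(0:ℝ)| ^ (q - 2) * (0:ℝ))) = nhds (0:ℝ) := by norm_num
    rw [hasDerivAt_iff_tendsto_slope, hval]
    have h0 : ContinuousAt (fun x : ℝ => x ^ (q-1)) 0 :=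
      Real.continuousAt_rpow_const 0 (q-1) (Or.inr (by linarith))
    have habs : ContinuousAt (fun s : ℝ => |s|) (0:ℝ) := continuous_abs.continuousAt
    have hcomp : ContinuousAt (fun s : ℝ => |s| ^ (q-1)) 0 := by
      have h0' : ContinuousAt (fun x : ℝ => x ^ (q-1)) (|(0:ℝ)|) := by simpa using h0
      exact h0'.comp habs
    have hT : Filter.Tendsto (fun s : ℝ => (1/q) * |s| ^ (q-1)) (nhds 0) (nhds 0) := by
      have := (hcomp.tendsto).const_mul (1/q)
      simpa [Real.zero_rpow (show q - 1 ≠ 0 by linarith)] using this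
    apply squeeze_zero_norm' _ (hT.mono_left nhdsWithin_le_nhds)
    filter_upwards [self_mem_nhdsWithin] with s hs
    have hs0 : s ≠ 0 := hs
    have h1 : (0:ℝ) < |s| := abs_pos.mpr hs0
    have hq0 : (0:ℝ) < 1/q := by positivity
    have hsl : slope (fun r : ℝ => (1/q) * |r| ^ q) 0 s = (1/q) * |s| ^ q / s := by
      rw [slope_def_field]
      simp [Real.zero_rpow (show q ≠ 0 by linarith)]
    rw [hsl, Real.norm_eq_abs, abs_div, abs_mul,
      abs_of_nonneg (Real.rpow_nonneg (abs_nonneg s) q), abs_of_pos hq0,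
      show q - 1 = q - 1 by ring, Real.rpow_sub h1, Real.rpow_one]
    exact le_of_eq (by ring)
  · have h1 : HasDerivAt (fun s : ℝ => (1/q) * s ^ q) ((1/q) * (q * t ^ (q-1))) t :=
      (Real.hasDerivAt_rpow_const (p := q) (Or.inl (ne_of_gt ht))).const_mul (1/q)
    have h2 : (fun s : ℝ => (1/q) * |s| ^ q) =ᶠ[nhds t] (fun s : ℝ => (1/q) * s ^ q) := by
      filter_upwards [Ioi_mem_nhds ht] with s hs
      rw [abs_of_pos hs]
    have h3 : (1/q) * (q * t ^ (q-1)) = |t| ^ (q - 2) * t := by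
      rw [abs_of_pos ht, show q - 1 = (q-2) + 1 by ring, Real.rpow_add ht, Real.rpow_one]
      field_simp
    rw [← h3]
    exact h1.congr_of_eventuallyEq h2

lemma continuous_inv_q_abs_rpow {q : ℝ} (hq : 1 < q) :
    Continuous (fun t : ℝ => (1/q) * |t| ^ q) := by
  rw [continuous_iff_continuousAt]
  exact fun t => (hasDerivAt_inv_q_abs_rpow hq t).continuousAt

lemma continuous_phi {q : ℝ} (hq : 1 < q) :
    Continuous (fun t : ℝ => |t| ^ (q - 2) * t) := by
  rw [continuous_iff_continuousAt]
  intro t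
  rcases eq_or_ne t 0 with rfl | ht
  · have hval : ((fun t : ℝ => |t| ^ (q - 2) * t) 0) = 0 := by simp
    unfold ContinuousAt
    rw [hval]
    have h0 : ContinuousAt (fun x : ℝ => x ^ (q-1)) (|(0:ℝ)|) := by
      simpa using Real.continuousAt_rpow_const 0 (q-1) (Or.inr (by linarith))
    have hT : Filter.Tendsto (fun s : ℝ => |s| ^ (q-1)) (nhds 0) (nhds 0) := by
      have := (h0.comp (continuous_abs.continuousAt (x := (0:ℝ)))).tendsto
      simpa [Function.comp_def, Real.zero_rpow (show q - 1 ≠ 0 by linarith)] using this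
    apply squeeze_zero_norm _ hT
    intro s
    rcases eq_or_ne s 0 with rfl | hs
    · simpa using Real.rpow_nonneg (le_refl (0:ℝ)) (q-1)
    · have h1 : (0:ℝ) < |s| := abs_pos.mpr hs
      rw [Real.norm_eq_abs, abs_mul, abs_of_nonneg (Real.rpow_nonneg (abs_nonneg s) _),
        show q - 1 = q - 2 + 1 by ring, Real.rpow_add h1, Real.rpow_one]
  · have h1 : ContinuousAt (fun x : ℝ => x ^ (q-2)) (|t|) :=
      Real.continuousAt_rpow_const _ _ (Or.inl (by simpa using ht))
    exact ((h1.comp (continuous_abs.continuousAt)).mul continuousAt_id)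

lemma Fint_hasDerivAt {f : ℕ → ℝ → ℝ} {k : ℕ} (hf : Continuous (f k)) (t : ℝ) :
    HasDerivAt (Fint f k) (f k t) t :=
  (intervalIntegral.integral_hasStrictDerivAt_right
    (hf.intervalIntegrable _ _) (hf.stronglyMeasurableAtFilter _ _) hf.continuousAt).hasDerivAt

lemma Fint_continuous {f : ℕ → ℝ → ℝ} {k : ℕ} (hf : Continuous (f k)) :
    Continuous (Fint f k) := by
  rw [continuous_iff_continuousAt]
  exact fun t => (Fint_hasDerivAt hf t).continuousAt

lemma Fint_zero (f : ℕ → ℝ → ℝ) (k : ℕ) : Fint f k 0 = 0 := by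
  simp [Fint]

lemma continuous_finset_sup' {ι X : Type*} [TopologicalSpace X] (s : Finset ι) (hs : s.Nonempty)
    (g : ι → X → ℝ) (hg : ∀ i, Continuous (g i)) :
    Continuous (fun x => s.sup' hs (fun i => g i x)) := by
  induction hs using Finset.Nonempty.cons_induction with
  | singleton a => simpa using hg a
  | cons a s ha hs ih =>
    have heq : (fun x => (Finset.cons a s ha).sup' (Finset.cons_nonempty ha) fun i => g i x)
        = fun x => (g a x) ⊔ (s.sup' hs fun i => g i x) := by
      funext x; exact Finset.sup'_cons hs _
    rw [heq]
    exact (hg a).max ih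

end AuxLemmas

/-! ### The finite-dimensional setting -/

noncomputable section Setting
open Finset

variable {T : ℕ}

/-- Extension of a finite vector to a function on `ℕ` vanishing outside `[1,T]`. -/
def extH (T : ℕ) (x : EuclideanSpace ℝ (Fin T)) : ℕ → ℝ :=
  fun k => if h : 1 ≤ k ∧ k ≤ T then x ⟨k - 1, by omega⟩ else 0

lemma extH_zero_lhs (x : EuclideanSpace ℝ (Fin T)) : extH T x 0 = 0 := by
  unfold extH; norm_num

lemma extH_top (x : EuclideanSpace ℝ (Fin T)) : extH T x (T + 1) = 0 := by
  unfold extH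
  rw [dif_neg (by omega)]

lemma extH_coord (x : EuclideanSpace ℝ (Fin T)) (i : Fin T) : extH T x ((i : ℕ) + 1) = x i := by
  have h : 1 ≤ (i : ℕ) + 1 ∧ (i : ℕ) + 1 ≤ T := ⟨by omega, by omega⟩
  simp only [extH, dif_pos h]
  rfl

lemma extH_linear (x v : EuclideanSpace ℝ (Fin T)) (s : ℝ) (k : ℕ) :
    extH T (x + s • v) k = extH T x k + s * extH T v k := by
  unfold extH
  by_cases h : 1 ≤ k ∧ k ≤ T
  · simp only [dif_pos h]
    simp [PiLp.add_apply, PiLp.smul_apply, smul_eq_mul]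
  · simp only [dif_neg h]; ring

lemma extH_smul_zero (k : ℕ) :
    extH T (0 : EuclideanSpace ℝ (Fin T)) k = 0 := by
  unfold extH
  by_cases h : 1 ≤ k ∧ k ≤ T
  · simp only [dif_pos h]; rfl
  · rw [dif_neg h]

lemma continuous_extH (k : ℕ) : Continuous (fun x : EuclideanSpace ℝ (Fin T) => extH T x k) := by
  unfold extH
  by_cases h : 1 ≤ k ∧ k ≤ T
  · simp only [dif_pos h]
    exact (EuclideanSpace.proj (⟨k - 1, by omega⟩ : Fin T) : EuclideanSpace ℝ (Fin T) →L[ℝ] ℝ).continuous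
  · simp only [dif_neg h]
    exact continuous_const

variable (T) in
/-- The energy functional. -/
def EE (p : ℕ → ℝ) (f : ℕ → ℝ → ℝ) (lam : ℝ) (x : EuclideanSpace ℝ (Fin T)) : ℝ :=
  ∑ j ∈ Finset.range (T + 1), (1 / p j) * |extH T x (j + 1) - extH T x j| ^ p j
    - lam * ∑ j ∈ Finset.range T, Fint f (j + 1) (extH T x (j + 1))

variable (T) in
/-- coefficient sequence -/
def aTerm (p : ℕ → ℝ) (x : EuclideanSpace ℝ (Fin T)) (j : ℕ) : ℝ :=
  |extH T x (j + 1) - extH T x j| ^ (p j - 2) * (extH T x (j + 1) - extH T x j)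

variable (T) in
/-- The gradient. -/
def GG (p : ℕ → ℝ) (f : ℕ → ℝ → ℝ) (lam : ℝ) (x : EuclideanSpace ℝ (Fin T)) :
    EuclideanSpace ℝ (Fin T) :=
  (WithLp.equiv 2 (Fin T → ℝ)).symm
    (fun i => aTerm T p x i - aTerm T p x ((i : ℕ) + 1) - lam * f ((i : ℕ) + 1) (extH T x ((i : ℕ) + 1)))

lemma GG_apply (p : ℕ → ℝ) (f : ℕ → ℝ → ℝ) (lam : ℝ) (x : EuclideanSpace ℝ (Fin T)) (i : Fin T) :
    GG T p f lam x i
      = aTerm T p x i - aTerm T p x ((i : ℕ) + 1) - lam * f ((i : ℕ) + 1) (extH T x ((i : ℕ) + 1)) := by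
  rfl

variable (T) in
lemma EE_continuous (p : ℕ → ℝ) (hp : ∀ k ≤ T + 1, 1 < p k) (f : ℕ → ℝ → ℝ)
    (hf : ∀ k, 1 ≤ k → k ≤ T → Continuous (f k)) (lam : ℝ) :
    Continuous (EE T p f lam) := by
  unfold EE
  apply Continuous.sub
  · apply continuous_finset_sum
    intro j hj
    have hq : 1 < p j := hp j (by simp at hj; omega)
    exact (continuous_inv_q_abs_rpow hq).comp ((continuous_extH (j+1)).sub (continuous_extH j))
  · apply Continuous.mul continuous_const
    apply continuous_finset_sum
    intro j hj
    simp only [Finset.mem_range] at hj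
    exact (Fint_continuous (hf (j+1) (by omega) (by omega))).comp (continuous_extH (j+1))

variable (T) in
lemma GG_continuous (p : ℕ → ℝ) (hp : ∀ k ≤ T + 1, 1 < p k) (f : ℕ → ℝ → ℝ)
    (hf : ∀ k, 1 ≤ k → k ≤ T → Continuous (f k)) (lam : ℝ) :
    Continuous (GG T p f lam) := by
  have haT : ∀ j : ℕ, j ≤ T → Continuous (fun x : EuclideanSpace ℝ (Fin T) => aTerm T p x j) := by
    intro j hj
    have hq : 1 < p j := hp j (by omega)
    exact (continuous_phi hq).comp ((continuous_extH (j+1)).sub (continuous_extH j))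
  have hpi : Continuous (fun x : EuclideanSpace ℝ (Fin T) => (fun i : Fin T =>
      aTerm T p x i - aTerm T p x ((i : ℕ) + 1) - lam * f ((i : ℕ) + 1) (extH T x ((i : ℕ) + 1)))) := by
    apply continuous_pi
    intro i
    refine ((haT i (by omega)).sub (haT ((i : ℕ) + 1) (by omega))).sub ?_
    exact continuous_const.mul ((hf ((i : ℕ) + 1) (by omega) (by omega)).comp (continuous_extH _))
  exact (PiLp.continuousLinearEquiv 2 ℝ (fun _ : Fin T => ℝ)).symm.continuous.comp hpi

variable (T) in
lemma inner_GG (p : ℕ → ℝ) (f : ℕ → ℝ → ℝ) (lam : ℝ) (x v : EuclideanSpace ℝ (Fin T)) :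
    (inner ℝ (GG T p f lam x) v : ℝ)
      = (∑ j ∈ Finset.range (T + 1), aTerm T p x j * (extH T v (j+1) - extH T v j))
        - lam * ∑ j ∈ Finset.range T, f (j+1) (extH T x (j+1)) * extH T v (j+1) := by
  rw [PiLp.inner_apply]
  have hterm : ∀ i : Fin T, (inner ℝ (GG T p f lam x i) (v i) : ℝ)
      = (fun m : ℕ => (aTerm T p x m - aTerm T p x (m + 1) - lam * f (m + 1) (extH T x (m + 1)))
          * extH T v (m + 1)) (i : ℕ) := by
    intro i
    rw [GG_apply, ← extH_coord v i]
    simp [RCLike.inner_apply, conj_trivial, mul_comm]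
  rw [Finset.sum_congr rfl (fun i _ => hterm i),
    Fin.sum_univ_eq_sum_range
      (fun m : ℕ => (aTerm T p x m - aTerm T p x (m + 1) - lam * f (m + 1) (extH T x (m + 1)))
        * extH T v (m + 1)) T]
  rw [abel_range T (aTerm T p x) (extH T v) (extH_zero_lhs v) (extH_top v)]
  rw [Finset.mul_sum, ← Finset.sum_sub_distrib]
  apply Finset.sum_congr rfl
  intro j hj
  ring

variable (T) in
lemma EE_hasDerivAt (p : ℕ → ℝ) (hp : ∀ k ≤ T + 1, 1 < p k) (f : ℕ → ℝ → ℝ)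
    (hf : ∀ k, 1 ≤ k → k ≤ T → Continuous (f k)) (lam : ℝ)
    (x v : EuclideanSpace ℝ (Fin T)) (t : ℝ) :
    HasDerivAt (fun s => EE T p f lam (x + s • v))
      ((inner ℝ (GG T p f lam (x + t • v)) v : ℝ)) t := by
  set u := extH T x with hu
  set w := extH T v with hw
  have hfun : (fun s => EE T p f lam (x + s • v))
      = fun s => (∑ j ∈ Finset.range (T+1),
            (1 / p j) * |(u (j+1) - u j) + s * (w (j+1) - w j)| ^ p j)
          - lam * ∑ j ∈ Finset.range T, Fint f (j+1) (u (j+1) + s * w (j+1)) := by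
    funext s
    unfold EE
    congr 1
    · apply Finset.sum_congr rfl; intro j hj
      rw [extH_linear, extH_linear, ← hu, ← hw]; ring_nf
    · congr 1; apply Finset.sum_congr rfl; intro j hj; rw [extH_linear]
  rw [hfun]
  have h1 : HasDerivAt (fun s => ∑ j ∈ Finset.range (T+1),
        (1 / p j) * |(u (j+1) - u j) + s * (w (j+1) - w j)| ^ p j)
      (∑ j ∈ Finset.range (T+1),
        |(u (j+1) - u j) + t * (w (j+1) - w j)| ^ (p j - 2)
          * ((u (j+1) - u j) + t * (w (j+1) - w j)) * (w (j+1) - w j)) t := by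
    apply HasDerivAt.fun_sum
    intro j hj
    have hq : 1 < p j := hp j (by simp at hj; omega)
    have haff : HasDerivAt (fun s : ℝ => (u (j+1) - u j) + s * (w (j+1) - w j))
        (w (j+1) - w j) t := by
      simpa using ((hasDerivAt_id t).mul_const (w (j+1) - w j)).const_add (u (j+1) - u j)
    have hkey := (hasDerivAt_inv_q_abs_rpow hq ((u (j+1) - u j) + t * (w (j+1) - w j))).comp t haff
    exact hkey
  have h2 : HasDerivAt (fun s => ∑ j ∈ Finset.range T, Fint f (j+1) (u (j+1) + s * w (j+1)))
      (∑ j ∈ Finset.range T, f (j+1) (u (j+1) + t * w (j+1)) * w (j+1)) t := by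
    apply HasDerivAt.fun_sum
    intro j hj
    simp only [Finset.mem_range] at hj
    have haff : HasDerivAt (fun s : ℝ => u (j+1) + s * w (j+1)) (w (j+1)) t := by
      simpa using ((hasDerivAt_id t).mul_const (w (j+1))).const_add (u (j+1))
    exact (Fint_hasDerivAt (hf (j+1) (by omega) (by omega)) _).comp t haff
  have hD := h1.sub (h2.const_mul lam)
  have hval : (inner ℝ (GG T p f lam (x + t • v)) v : ℝ)
      = (∑ j ∈ Finset.range (T+1),
          |(u (j+1) - u j) + t * (w (j+1) - w j)| ^ (p j - 2)
            * ((u (j+1) - u j) + t * (w (j+1) - w j)) * (w (j+1) - w j))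
        - lam * ∑ j ∈ Finset.range T, f (j+1) (u (j+1) + t * w (j+1)) * w (j+1) := by
    rw [inner_GG]
    congr 1
    · apply Finset.sum_congr rfl
      intro j hj
      unfold aTerm
      rw [extH_linear, extH_linear, ← hu, ← hw]
      ring_nf
    · congr 1
      apply Finset.sum_congr rfl
      intro j hj
      rw [extH_linear, ← hu, ← hw]
  rw [hval]
  exact hD

variable (T) in
lemma isCriticalPoint_of_GG_eq_zero {p : ℕ → ℝ} {f : ℕ → ℝ → ℝ} {lam : ℝ}
    {x : EuclideanSpace ℝ (Fin T)} (hGG : GG T p f lam x = 0) :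
    IsCriticalPoint T p f lam (extH T x) := by
  refine ⟨extH_zero_lhs x, extH_top x, ?_⟩
  intro v hv0 hvT
  have hL : ∑ k ∈ Finset.Icc 1 (T + 1),
      |extH T x k - extH T x (k - 1)| ^ (p (k - 1) - 2) * (extH T x k - extH T x (k - 1))
        * (v k - v (k - 1))
      = ∑ j ∈ Finset.range (T + 1), aTerm T p x j * (v (j+1) - v j) := by
    rw [sum_Icc_one]
    apply Finset.sum_congr rfl
    intro j hj
    simp only [Nat.add_sub_cancel]
    rfl
  rw [hL, abel_range T (aTerm T p x) v hv0 hvT,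
    sum_Icc_one T (fun k => f k (extH T x k) * v k), Finset.mul_sum]
  apply Finset.sum_congr rfl
  intro j hj
  have hco : GG T p f lam x ⟨j, Finset.mem_range.mp hj⟩ = 0 := by rw [hGG]; rfl
  rw [GG_apply] at hco
  simp only at hco
  have : aTerm T p x j - aTerm T p x (j + 1) = lam * f (j + 1) (extH T x (j + 1)) := by
    linarith [hco]
  rw [this]
  ring

end Setting

section MinLemmas
open Filter

variable {n : ℕ}

lemma grad_zero_of_isLocalMin {E : EuclideanSpace ℝ (Fin n) → ℝ}
    {G : EuclideanSpace ℝ (Fin n) → EuclideanSpace ℝ (Fin n)}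
    (Hder : ∀ x v : EuclideanSpace ℝ (Fin n), ∀ t : ℝ,
      HasDerivAt (fun s => E (x + s • v)) ((inner ℝ (G (x + t • v)) v : ℝ)) t)
    {x : EuclideanSpace ℝ (Fin n)} (h : IsLocalMin E x) : G x = 0 := by
  have hv : ∀ v, (inner ℝ (G x) v : ℝ) = 0 := by
    intro v
    have hline : Filter.Tendsto (fun s : ℝ => x + s • v) (nhds 0) (nhds x) := by
      have hc : Continuous (fun s : ℝ => x + s • v) := by continuity
      simpa using hc.tendsto 0
    have hloc : IsLocalMin (fun s : ℝ => E (x + s • v)) 0 := by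
      have h' := hline.eventually h
      unfold IsLocalMin IsMinFilter at *
      simpa using h'
    have hd := Hder x v 0
    rw [show x + (0:ℝ) • v = x by simp] at hd
    exact hloc.hasDerivAt_eq_zero hd
  have h0 := hv (G x)
  exact inner_self_eq_zero.mp h0

lemma exists_min_on_closed {E : EuclideanSpace ℝ (Fin n) → ℝ} (hE : Continuous E)
    (hcoer : ∀ A : ℝ, ∃ R : ℝ, ∀ x, E x ≤ A → ‖x‖ ≤ R)
    {S : Set (EuclideanSpace ℝ (Fin n))} (hS : IsClosed S) (hne : S.Nonempty) :
    ∃ x ∈ S, ∀ y ∈ S, E x ≤ E y := by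
  obtain ⟨z, hz⟩ := hne
  obtain ⟨R, hR⟩ := hcoer (E z)
  set K := S ∩ {x | E x ≤ E z} with hK
  have hKc : IsCompact K := by
    apply IsCompact.of_isClosed_subset (isCompact_closedBall (0 : EuclideanSpace ℝ (Fin n)) R)
      (hS.inter (isClosed_le hE continuous_const))
    intro y hy
    simpa [Metric.mem_closedBall, dist_zero_right] using hR y hy.2
  have hKne : K.Nonempty := ⟨z, hz, show E z ≤ E z from le_rfl⟩
  obtain ⟨x₀, hx₀K, hmin⟩ := hKc.exists_isMinOn hKne hE.continuousOn
  refine ⟨x₀, hx₀K.1, ?_⟩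
  intro y hy
  by_cases hyz : E y ≤ E z
  · exact (isMinOn_iff.mp hmin) y ⟨hy, hyz⟩
  · exact le_trans ((isMinOn_iff.mp hmin) z ⟨hz, show E z ≤ E z from le_rfl⟩) (by linarith)

end MinLemmas

noncomputable section SupNorm

/-- The sup norm on the finite-dimensional space. -/
def MX {T : ℕ} (hT : 1 ≤ T) (x : EuclideanSpace ℝ (Fin T)) : ℝ :=
  (Finset.univ : Finset (Fin T)).sup' (show (Finset.univ : Finset (Fin T)).Nonempty from ⟨⟨0, hT⟩, Finset.mem_univ _⟩) fun i => |x i|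

variable {T : ℕ} (hT : 1 ≤ T)

lemma MX_le_iff {x : EuclideanSpace ℝ (Fin T)} {b : ℝ} :
    MX hT x ≤ b ↔ ∀ i, |x i| ≤ b := by
  rw [MX, Finset.sup'_le_iff]
  exact ⟨fun h i => h i (Finset.mem_univ i), fun h i _ => h i⟩

lemma coord_le_MX (x : EuclideanSpace ℝ (Fin T)) (i : Fin T) : |x i| ≤ MX hT x := by
  rw [MX]; exact Finset.le_sup' (fun j : Fin T => |x j|) (Finset.mem_univ i)

lemma MX_nonneg (x : EuclideanSpace ℝ (Fin T)) : 0 ≤ MX hT x :=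
  le_trans (abs_nonneg _) (coord_le_MX hT x ⟨0, hT⟩)

lemma MX_exists_coord (x : EuclideanSpace ℝ (Fin T)) : ∃ i : Fin T, MX hT x = |x i| := by
  obtain ⟨i, _, hi⟩ := Finset.exists_mem_eq_sup' (⟨(⟨0, hT⟩ : Fin T), Finset.mem_univ _⟩ :
    (Finset.univ : Finset (Fin T)).Nonempty) (fun i => |x i|)
  exact ⟨i, hi⟩

lemma MX_continuous : Continuous (MX hT (T := T)) := by
  apply continuous_finset_sup'
  intro i
  exact ((EuclideanSpace.proj i : EuclideanSpace ℝ (Fin T) →L[ℝ] ℝ).continuous).abs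

lemma MX_zero : MX hT (0 : EuclideanSpace ℝ (Fin T)) = 0 := by
  have h1 : MX hT (0 : EuclideanSpace ℝ (Fin T)) ≤ 0 := by
    rw [MX_le_iff]
    intro i
    simp [PiLp.zero_apply]
  exact le_antisymm h1 (MX_nonneg hT 0)

lemma abs_extH_le_MX (x : EuclideanSpace ℝ (Fin T)) (k : ℕ) : |extH T x k| ≤ MX hT x := by
  unfold extH
  by_cases h : 1 ≤ k ∧ k ≤ T
  · rw [dif_pos h]
    exact coord_le_MX hT x _
  · rw [dif_neg h]
    simpa using MX_nonneg hT x

lemma norm_le_sqrt_MX (x : EuclideanSpace ℝ (Fin T)) :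
    ‖x‖ ≤ Real.sqrt T * MX hT x := by
  rw [EuclideanSpace.norm_eq, ← Real.sqrt_sq (MX_nonneg hT x), ← Real.sqrt_mul (by positivity)]
  apply Real.sqrt_le_sqrt
  calc ∑ i : Fin T, ‖x i‖ ^ 2 ≤ ∑ _i : Fin T, (MX hT x) ^ 2 := by
        apply Finset.sum_le_sum
        intro i _
        have := coord_le_MX hT x i
        have h0 : ‖x i‖ = |x i| := rfl
        rw [h0]
        nlinarith [abs_nonneg (x i)]
    _ = T * (MX hT x) ^ 2 := by simp [Finset.sum_const]

end SupNorm

noncomputable section Energy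
variable {T : ℕ}

variable (T) in
/-- The μ-part of the energy. -/
def muE (p : ℕ → ℝ) (x : EuclideanSpace ℝ (Fin T)) : ℝ :=
  ∑ j ∈ Finset.range (T + 1), (1 / p j) * |extH T x (j + 1) - extH T x j| ^ p j

variable (T) in
/-- The F-part of the energy. -/
def sF (f : ℕ → ℝ → ℝ) (x : EuclideanSpace ℝ (Fin T)) : ℝ :=
  ∑ j ∈ Finset.range T, Fint f (j + 1) (extH T x (j + 1))

lemma EE_eq (p : ℕ → ℝ) (f : ℕ → ℝ → ℝ) (lam : ℝ) (x : EuclideanSpace ℝ (Fin T)) :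
    EE T p f lam x = muE T p x - lam * sF T f x := rfl

lemma sF_eq_Icc (f : ℕ → ℝ → ℝ) (x : EuclideanSpace ℝ (Fin T)) :
    sF T f x = ∑ k ∈ Finset.Icc 1 T, Fint f k (extH T x k) :=
  (sum_Icc_one T fun k => Fint f k (extH T x k)).symm

lemma muE_nonneg (p : ℕ → ℝ) (hp : ∀ k ≤ T + 1, 1 < p k) (x : EuclideanSpace ℝ (Fin T)) :
    0 ≤ muE T p x := by
  apply Finset.sum_nonneg
  intro j hj
  have hq : 1 < p j := hp j (by simp at hj; omega)
  have h1 : (0:ℝ) ≤ 1 / p j := by positivity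
  exact mul_nonneg h1 (Real.rpow_nonneg (abs_nonneg _) _)

lemma muE_zero (p : ℕ → ℝ) (hp : ∀ k ≤ T + 1, 1 < p k) :
    muE T p (0 : EuclideanSpace ℝ (Fin T)) = 0 := by
  apply Finset.sum_eq_zero
  intro j hj
  have hq : 1 < p j := hp j (by simp at hj; omega)
  rw [extH_smul_zero, extH_smul_zero]
  simp [Real.zero_rpow (show p j ≠ 0 by linarith)]

lemma sF_zero (f : ℕ → ℝ → ℝ) : sF T f (0 : EuclideanSpace ℝ (Fin T)) = 0 := by
  apply Finset.sum_eq_zero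
  intro j hj
  rw [extH_smul_zero, Fint_zero]

lemma EE_zero (p : ℕ → ℝ) (hp : ∀ k ≤ T + 1, 1 < p k) (f : ℕ → ℝ → ℝ) (lam : ℝ) :
    EE T p f lam (0 : EuclideanSpace ℝ (Fin T)) = 0 := by
  rw [EE_eq, muE_zero p hp, sF_zero]
  ring

lemma extH_telescope (x : EuclideanSpace ℝ (Fin T)) (k : ℕ) :
    extH T x k = ∑ j ∈ Finset.range k, (extH T x (j + 1) - extH T x j) := by
  rw [Finset.sum_range_sub (f := extH T x), extH_zero_lhs, sub_zero]

/-- If the sup norm is positive then some increment is nonzero, giving positivity of μ. -/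
lemma muE_pos (p : ℕ → ℝ) (hp : ∀ k ≤ T + 1, 1 < p k) (hT : 1 ≤ T)
    (x : EuclideanSpace ℝ (Fin T)) (hx : 0 < MX hT x) : 0 < muE T p x := by
  obtain ⟨i₀, hi₀⟩ := MX_exists_coord hT x
  have hxi₀ : x i₀ ≠ 0 := by
    intro h
    rw [h] at hi₀
    simp at hi₀
    rw [hi₀] at hx
    exact lt_irrefl _ hx
  have hex : ∃ j ∈ Finset.range (T + 1), extH T x (j + 1) - extH T x j ≠ 0 := by
    by_contra hno
    push_neg at hno
    have hall : ∀ k, k ≤ T + 1 → extH T x k = 0 := by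
      intro k hk
      rw [extH_telescope]
      apply Finset.sum_eq_zero
      intro j hj
      simp only [Finset.mem_range] at hj
      exact hno j (Finset.mem_range.mpr (by omega))
    have := hall ((i₀ : ℕ) + 1) (by omega)
    rw [extH_coord] at this
    exact hxi₀ this
  obtain ⟨j₀, hj₀mem, hj₀⟩ := hex
  have hterm : 0 < (1 / p j₀) * |extH T x (j₀ + 1) - extH T x j₀| ^ p j₀ := by
    have hq : 1 < p j₀ := hp j₀ (by simp at hj₀mem; omega)
    have h1 : (0:ℝ) < 1 / p j₀ := by positivity
    have h2 : (0:ℝ) < |extH T x (j₀ + 1) - extH T x j₀| := abs_pos.mpr hj₀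
    exact mul_pos h1 (Real.rpow_pos_of_pos h2 _)
  apply lt_of_lt_of_le hterm
  apply Finset.single_le_sum _ hj₀mem
  intro j hj
  have hq : 1 < p j := hp j (by simp at hj; omega)
  have h1 : (0:ℝ) ≤ 1 / p j := by positivity
  exact mul_nonneg h1 (Real.rpow_nonneg (abs_nonneg _) _)

/-- Lower bound for μ in terms of the sup norm, when the latter is large. -/
lemma muE_growth (p : ℕ → ℝ) (hp : ∀ k ≤ T + 1, 1 < p k) (hT : 1 ≤ T)
    (pm pp : ℝ) (hpm1 : 1 < pm) (hpmle : ∀ j ≤ T + 1, pm ≤ p j) (hple : ∀ j ≤ T + 1, p j ≤ pp)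
    (x : EuclideanSpace ℝ (Fin T)) (hx : (T:ℝ) + 1 ≤ MX hT x) :
    (1 / pp) * ((1 / ((T:ℝ) + 1)) ^ pm) * (MX hT x) ^ pm ≤ muE T p x := by
  have hpp1 : 1 < pp := lt_of_lt_of_le hpm1 (le_trans (hpmle 0 (by omega)) (hple 0 (by omega)))
  -- find the largest increment
  have hrne : (Finset.range (T + 1)).Nonempty := ⟨0, by simp⟩
  obtain ⟨j₀, hj₀mem, hj₀⟩ := Finset.exists_mem_eq_sup' hrne
    (fun j => |extH T x (j + 1) - extH T x j|)
  set D := (Finset.range (T + 1)).sup' hrne (fun j => |extH T x (j + 1) - extH T x j|) with hD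
  have hDle : ∀ j ∈ Finset.range (T + 1), |extH T x (j + 1) - extH T x j| ≤ D := by
    intro j hj
    rw [hD]
    exact Finset.le_sup' (fun m => |extH T x (m + 1) - extH T x m|) hj
  -- MX x ≤ (T+1) * D
  obtain ⟨i₀, hi₀⟩ := MX_exists_coord hT x
  have hMD : MX hT x ≤ ((T:ℝ) + 1) * D := by
    rw [hi₀, ← extH_coord x i₀, extH_telescope]
    calc |∑ j ∈ Finset.range ((i₀:ℕ) + 1), (extH T x (j + 1) - extH T x j)|
        ≤ ∑ j ∈ Finset.range ((i₀:ℕ) + 1), |extH T x (j + 1) - extH T x j| :=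
          Finset.abs_sum_le_sum_abs _ _
      _ ≤ ∑ j ∈ Finset.range (T + 1), |extH T x (j + 1) - extH T x j| := by
          apply Finset.sum_le_sum_of_subset_of_nonneg
          · apply Finset.range_subset_range.mpr; omega
          · intro j _ _; exact abs_nonneg _
      _ ≤ ∑ _j ∈ Finset.range (T + 1), D := Finset.sum_le_sum hDle
      _ = ((T:ℝ) + 1) * D := by
          rw [Finset.sum_const, Finset.card_range]
          push_cast
          ring
  have hT1pos : (0:ℝ) < (T:ℝ) + 1 := by positivity
  have hDge : MX hT x / ((T:ℝ) + 1) ≤ |extH T x (j₀ + 1) - extH T x j₀| := by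
    rw [← hj₀]
    rw [div_le_iff₀ hT1pos]
    linarith [hMD]
  have hD1 : (1:ℝ) ≤ |extH T x (j₀ + 1) - extH T x j₀| := by
    have h1 : (1:ℝ) ≤ MX hT x / ((T:ℝ) + 1) := by
      rw [le_div_iff₀ hT1pos]; linarith
    linarith
  have hMpos : (0:ℝ) < MX hT x := by linarith
  have hj₀T : j₀ ≤ T + 1 := by simp at hj₀mem; omega
  have hstep1 : (MX hT x / ((T:ℝ) + 1)) ^ pm ≤ |extH T x (j₀ + 1) - extH T x j₀| ^ pm :=
    Real.rpow_le_rpow (by positivity) hDge (by linarith)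
  have hstep2 : |extH T x (j₀ + 1) - extH T x j₀| ^ pm ≤ |extH T x (j₀ + 1) - extH T x j₀| ^ p j₀ :=
    Real.rpow_le_rpow_of_exponent_le hD1 (hpmle j₀ hj₀T)
  have hstep3 : (1 / pp) * |extH T x (j₀ + 1) - extH T x j₀| ^ p j₀
      ≤ (1 / p j₀) * |extH T x (j₀ + 1) - extH T x j₀| ^ p j₀ := by
    apply mul_le_mul_of_nonneg_right _ (Real.rpow_nonneg (abs_nonneg _) _)
    apply one_div_le_one_div_of_le
    · linarith [hpmle j₀ hj₀T, hpm1]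
    · exact hple j₀ hj₀T
  have hstep4 : (1 / p j₀) * |extH T x (j₀ + 1) - extH T x j₀| ^ p j₀ ≤ muE T p x := by
    apply Finset.single_le_sum _ hj₀mem
    intro j hj
    have hq : 1 < p j := hp j (by simp at hj; omega)
    exact mul_nonneg (by positivity) (Real.rpow_nonneg (abs_nonneg _) _)
  have hdiv : (MX hT x / ((T:ℝ) + 1)) ^ pm = (MX hT x) ^ pm * (1 / ((T:ℝ) + 1)) ^ pm := by
    rw [div_eq_mul_one_div, Real.mul_rpow (le_of_lt hMpos) (by positivity)]
  have hfin : (1 / pp) * ((1 / ((T:ℝ) + 1)) ^ pm) * (MX hT x) ^ pm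
      = (1 / pp) * ((MX hT x / ((T:ℝ) + 1)) ^ pm) := by
    rw [hdiv]; ring
  rw [hfin]
  have hppinv : (0:ℝ) ≤ 1 / pp := by positivity
  calc (1 / pp) * ((MX hT x / ((T:ℝ) + 1)) ^ pm)
      ≤ (1 / pp) * |extH T x (j₀ + 1) - extH T x j₀| ^ pm := by
        apply mul_le_mul_of_nonneg_left hstep1 hppinv
    _ ≤ (1 / pp) * |extH T x (j₀ + 1) - extH T x j₀| ^ p j₀ := by
        apply mul_le_mul_of_nonneg_left hstep2 hppinv
    _ ≤ (1 / p j₀) * |extH T x (j₀ + 1) - extH T x j₀| ^ p j₀ := hstep3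
    _ ≤ muE T p x := hstep4

end Energy


/-! ### Mountain pass theorem in finite dimensions -/

section MP
open Filter

set_option maxHeartbeats 1000000 in
theorem mountain_pass {n : ℕ} (E : EuclideanSpace ℝ (Fin n) → ℝ)
    (G : EuclideanSpace ℝ (Fin n) → EuclideanSpace ℝ (Fin n))
    (hE : Continuous E) (hG : Continuous G)
    (Hder : ∀ x v : EuclideanSpace ℝ (Fin n), ∀ t : ℝ,
      HasDerivAt (fun s => E (x + s • v)) ((inner ℝ (G (x + t • v)) v : ℝ)) t)
    (hcoer : ∀ A : ℝ, ∃ R : ℝ, ∀ x, E x ≤ A → ‖x‖ ≤ R)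
    (a b : EuclideanSpace ℝ (Fin n)) (hEa : E a ≤ 0) (hEb : E b ≤ 0) (β : ℝ) (hβ : 0 < β)
    (hsep : ∀ γ : ℝ → EuclideanSpace ℝ (Fin n), Continuous γ → γ 0 = a → γ 1 = b →
      ∃ t ∈ Set.Icc (0:ℝ) 1, β ≤ E (γ t)) :
    ∃ x, G x = 0 ∧ 0 < E x := by
  classical
  by_contra hcon
  push_neg at hcon
  -- `hcon : ∀ x, G x = 0 → E x ≤ 0`
  set P : Set (ℝ → EuclideanSpace ℝ (Fin n)) := {γ | Continuous γ ∧ γ 0 = a ∧ γ 1 = b} with hP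
  set maxE : (ℝ → EuclideanSpace ℝ (Fin n)) → ℝ := fun γ => sSup (E ∘ γ '' Set.Icc 0 1)
    with hmaxE
  have hub : ∀ γ : ℝ → EuclideanSpace ℝ (Fin n), Continuous γ →
      ∀ t ∈ Set.Icc (0:ℝ) 1, E (γ t) ≤ maxE γ := by
    intro γ hγ t ht
    have himg : IsCompact (E ∘ γ '' Set.Icc 0 1) := isCompact_Icc.image (hE.comp hγ)
    exact le_csSup himg.bddAbove ⟨t, ht, rfl⟩
  have hmem : ∀ γ : ℝ → EuclideanSpace ℝ (Fin n), Continuous γ →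
      ∃ t ∈ Set.Icc (0:ℝ) 1, E (γ t) = maxE γ := by
    intro γ hγ
    have himg : IsCompact (E ∘ γ '' Set.Icc 0 1) := isCompact_Icc.image (hE.comp hγ)
    have hne : (E ∘ γ '' Set.Icc 0 1).Nonempty :=
      ⟨E (γ 0), ⟨0, ⟨le_rfl, zero_le_one⟩, rfl⟩⟩
    obtain ⟨t, ht, hts⟩ := himg.sSup_mem hne
    exact ⟨t, ht, hts⟩
  set S : Set ℝ := maxE '' P with hS
  have hSne : S.Nonempty := by
    refine ⟨maxE (fun t => a + t • (b - a)), ⟨fun t => a + t • (b - a), ⟨?_, ?_, ?_⟩, rfl⟩⟩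
    · exact continuous_const.add (continuous_id.smul continuous_const)
    · simp
    · simp
  have hSbd : ∀ m ∈ S, β ≤ m := by
    rintro m ⟨γ, ⟨hγc, hγ0, hγ1⟩, rfl⟩
    obtain ⟨t, ht, hβt⟩ := hsep γ hγc hγ0 hγ1
    exact le_trans hβt (hub γ hγc t ht)
  have hSbdd : BddBelow S := ⟨β, hSbd⟩
  set c := sInf S with hc
  have hcβ : β ≤ c := le_csInf hSne hSbd
  have hc0 : 0 < c := lt_of_lt_of_le hβ hcβ
  set ε := c / 8 with hε
  have hε0 : 0 < ε := by positivity
  -- the band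
  set K : Set (EuclideanSpace ℝ (Fin n)) := {x | c - ε ≤ E x ∧ E x ≤ c + ε} with hK
  have hKnocrit : ∀ x ∈ K, G x ≠ 0 := by
    intro x hx hGx
    have := hcon x hGx
    have : c - ε ≤ E x := hx.1
    nlinarith
  obtain ⟨R, hR⟩ := hcoer (c + ε)
  set R' : ℝ := max R 0 with hR'
  have hKball : K ⊆ Metric.closedBall 0 R' := by
    intro x hx
    simp only [Metric.mem_closedBall, dist_zero_right]
    exact le_trans (hR x hx.2) (le_max_left _ _)
  have hKclosed : IsClosed K := by
    have : K = {x | c - ε ≤ E x} ∩ {x | E x ≤ c + ε} := rfl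
    rw [this]
    exact (isClosed_le continuous_const hE).inter (isClosed_le hE continuous_const)
  have hKc : IsCompact K :=
    IsCompact.of_isClosed_subset (isCompact_closedBall _ _) hKclosed hKball
  have hKne : K.Nonempty := by
    obtain ⟨m, hmS, hm⟩ := exists_lt_of_csInf_lt hSne (show c < c + ε by linarith)
    obtain ⟨γ₁, hγ₁P, rfl⟩ := hmS
    obtain ⟨t₁, ht₁, hE₁⟩ := hmem γ₁ hγ₁P.1
    have hcle : c ≤ maxE γ₁ := csInf_le hSbdd ⟨γ₁, hγ₁P, rfl⟩
    exact ⟨γ₁ t₁, by constructor <;> [linarith; linarith]⟩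
  -- minimal gradient norm on the band
  obtain ⟨xδ, hxδK, hxδmin⟩ := hKc.exists_isMinOn hKne ((continuous_norm.comp hG)).continuousOn
  set δ := ‖G xδ‖ with hδ
  have hδ0 : 0 < δ := norm_pos_iff.mpr (hKnocrit xδ hxδK)
  have hδle : ∀ x ∈ K, δ ≤ ‖G x‖ := fun x hx => (isMinOn_iff.mp hxδmin) x hx
  -- maximal gradient norm on a big ball
  set K₂ : Set (EuclideanSpace ℝ (Fin n)) := Metric.closedBall 0 (R' + 1) with hK₂
  have hK₂c : IsCompact K₂ := isCompact_closedBall _ _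
  have hK₂ne : K₂.Nonempty := ⟨0, by simp [hK₂]; positivity⟩
  obtain ⟨xM, _, hxMmax⟩ := hK₂c.exists_isMaxOn hK₂ne ((continuous_norm.comp hG)).continuousOn
  set Mg : ℝ := max ‖G xM‖ 1 with hMg
  have hMg1 : (1:ℝ) ≤ Mg := le_max_right _ _
  have hMg0 : (0:ℝ) < Mg := lt_of_lt_of_le one_pos hMg1
  have hMgle : ∀ y ∈ K₂, ‖G y‖ ≤ Mg := fun y hy =>
    le_trans ((isMaxOn_iff.mp hxMmax) y hy) (le_max_left _ _)
  -- uniform continuity of G on K₂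
  have hGuc : UniformContinuousOn G K₂ := hK₂c.uniformContinuousOn_of_continuous hG.continuousOn
  obtain ⟨τ₀, hτ₀0, hτ₀⟩ := (Metric.uniformContinuousOn_iff.mp hGuc) (δ/2) (by positivity)
  set τ : ℝ := min (τ₀ / (2 * Mg)) (1 / Mg) with hτ
  have hτ0 : 0 < τ := by
    apply lt_min <;> positivity
  have hτMg₁ : τ * Mg < τ₀ := by
    have h1 : τ ≤ τ₀ / (2 * Mg) := min_le_left _ _
    have : τ * Mg ≤ (τ₀ / (2 * Mg)) * Mg := by nlinarith
    have h2 : (τ₀ / (2 * Mg)) * Mg = τ₀ / 2 := by field_simp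
    nlinarith
  have hτMg₂ : τ * Mg ≤ 1 := by
    have h1 : τ ≤ 1 / Mg := min_le_right _ _
    have h2 : (1 / Mg) * Mg = 1 := by field_simp
    nlinarith
  -- cut-off function
  set χ : ℝ → ℝ := fun s =>
    max 0 (min 1 (min ((s - (c - ε)) * (2/ε)) (((c + ε) - s) * (2/ε)))) with hχ
  have hχ01 : ∀ s, 0 ≤ χ s ∧ χ s ≤ 1 := by
    intro s
    constructor
    · exact le_max_left _ _
    · apply max_le (by norm_num)
      exact min_le_left _ _
  have hχcont : Continuous χ := by
    apply continuous_const.max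
    apply continuous_const.min
    exact ((continuous_id.sub continuous_const).mul continuous_const).min
      ((continuous_const.sub continuous_id).mul continuous_const)
  have hχband : ∀ s, 0 < χ s → c - ε ≤ s ∧ s ≤ c + ε := by
    intro s hs
    by_contra hns
    push_neg at hns
    have : min ((s - (c - ε)) * (2/ε)) (((c + ε) - s) * (2/ε)) ≤ 0 := by
      rcases le_or_gt s (c - ε) with h | h
      · exact le_trans (min_le_left _ _)
          (mul_nonpos_iff.mpr (Or.inr ⟨by linarith, by positivity⟩))
      · have h' := hns (by linarith)
        exact le_trans (min_le_right _ _)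
          (mul_nonpos_iff.mpr (Or.inr ⟨by linarith, by positivity⟩))
    have : χ s = 0 := by
      rw [hχ]
      simp only
      rw [max_eq_left]
      exact le_trans (min_le_right _ _) this
    linarith [hs, this]
  have hχ1 : ∀ s, c - ε/2 ≤ s → s ≤ c + ε/2 → χ s = 1 := by
    intro s h1 h2
    have ha : (1:ℝ) ≤ (s - (c - ε)) * (2/ε) := by
      rw [show (1:ℝ) = (ε/2) * (2/ε) by field_simp]
      apply mul_le_mul_of_nonneg_right (by linarith) (by positivity)
    have hb : (1:ℝ) ≤ ((c + ε) - s) * (2/ε) := by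
      rw [show (1:ℝ) = (ε/2) * (2/ε) by field_simp]
      apply mul_le_mul_of_nonneg_right (by linarith) (by positivity)
    rw [hχ]
    simp only
    rw [min_eq_left (le_min ha hb), max_eq_right (by norm_num)]
  have hχlow : ∀ s, s ≤ c - ε → χ s = 0 := by
    intro s h
    rw [hχ]
    simp only
    rw [max_eq_left]
    refine le_trans (min_le_right _ _) (le_trans (min_le_left _ _)
      (mul_nonpos_iff.mpr (Or.inr ⟨by linarith, by positivity⟩)))
  -- one deformation step
  set η : EuclideanSpace ℝ (Fin n) → EuclideanSpace ℝ (Fin n) :=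
    fun x => x - (τ * χ (E x)) • G x with hη
  have hηcont : Continuous η :=
    continuous_id.sub ((continuous_const.mul (hχcont.comp hE)).smul hG)
  have hdec : ∀ x, E (η x) ≤ E x - (τ * χ (E x)) * (δ^2/2) ∧ E (η x) ≤ E x := by
    intro x
    rcases eq_or_lt_of_le (hχ01 (E x)).1 with hx0 | hχpos
    · have hfix : η x = x := by
        rw [hη]
        simp [← hx0]
      rw [hfix, ← hx0]
      constructor <;> simp
    · have hxK : x ∈ K := by
        have := hχband (E x) hχpos
        exact ⟨this.1, this.2⟩
      have hGxδ : δ ≤ ‖G x‖ := hδle x hxK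
      have hxR : ‖x‖ ≤ R' := by
        have := hKball hxK
        simpa [Metric.mem_closedBall, dist_zero_right] using this
      have hxK₂ : x ∈ K₂ := by
        simp only [hK₂, Metric.mem_closedBall, dist_zero_right]
        linarith
      have hGxMg : ‖G x‖ ≤ Mg := hMgle x hxK₂
      set s₀ : ℝ := τ * χ (E x) with hs₀
      have hs₀pos : 0 < s₀ := mul_pos hτ0 hχpos
      have hs₀τ : s₀ ≤ τ := by
        have := (hχ01 (E x)).2
        nlinarith
      -- mean value theorem along the segment
      have hcont : ContinuousOn (fun t : ℝ => E (x + t • (-G x))) (Set.Icc 0 s₀) :=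
        (hE.comp (continuous_const.add (continuous_id.smul continuous_const))).continuousOn
      obtain ⟨ξ, hξmem, hξeq⟩ := exists_hasDerivAt_eq_slope
        (fun t : ℝ => E (x + t • (-G x)))
        (fun t : ℝ => (inner ℝ (G (x + t • (-G x))) (-G x) : ℝ)) hs₀pos hcont
        (fun t _ => Hder x (-G x) t)
      set y := x + ξ • (-G x) with hy
      have hξ0 : 0 < ξ := hξmem.1
      have hξs₀ : ξ < s₀ := hξmem.2
      have hyx : ‖y - x‖ = ξ * ‖G x‖ := by
        rw [hy]
        simp [norm_smul, abs_of_pos hξ0]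
      have hyK₂ : y ∈ K₂ := by
        simp only [hK₂, Metric.mem_closedBall, dist_zero_right]
        have : ‖y‖ - ‖x‖ ≤ ‖y - x‖ := norm_sub_norm_le y x
        have h2 : ξ * ‖G x‖ ≤ τ * Mg := by nlinarith
        linarith [hτMg₂]
      have hdist : dist x y < τ₀ := by
        rw [dist_comm, dist_eq_norm]
        calc ‖y - x‖ = ξ * ‖G x‖ := hyx
          _ ≤ τ * Mg := by nlinarith
          _ < τ₀ := hτMg₁
      have hGyx : ‖G y - G x‖ ≤ δ / 2 := by
        have := hτ₀ x hxK₂ y hyK₂ hdist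
        rw [dist_eq_norm] at this
        have h2 : G x - G y = -(G y - G x) := by abel
        rw [h2, norm_neg] at this
        linarith
      have hinner : (δ^2/2 : ℝ) ≤ (inner ℝ (G y) (G x) : ℝ) := by
        have hsplit : (inner ℝ (G y) (G x) : ℝ)
            = (inner ℝ (G x) (G x) : ℝ) + (inner ℝ (G y - G x) (G x) : ℝ) := by
          rw [← inner_add_left]
          norm_num
        have hcs : |(inner ℝ (G y - G x) (G x) : ℝ)| ≤ ‖G y - G x‖ * ‖G x‖ :=
          abs_real_inner_le_norm _ _
        have hself : (inner ℝ (G x) (G x) : ℝ) = ‖G x‖ ^ 2 := real_inner_self_eq_norm_sq _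
        have h1 : -(δ/2 * ‖G x‖) ≤ (inner ℝ (G y - G x) (G x) : ℝ) := by
          have := neg_abs_le ((inner ℝ (G y - G x) (G x) : ℝ))
          nlinarith [norm_nonneg (G x)]
        rw [hsplit, hself]
        nlinarith [norm_nonneg (G x)]
      -- conclude
      have hηx : η x = x + s₀ • (-G x) := by
        rw [hη, hs₀]
        simp only [smul_neg]
        abel
      have hslope : (inner ℝ (G y) (-G x) : ℝ)
          = (E (x + s₀ • (-G x)) - E (x + (0:ℝ) • (-G x))) / (s₀ - 0) := hξeq
      have hEeq : E (η x) = E x - s₀ * (inner ℝ (G y) (G x) : ℝ) := by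
        have h0 : E (x + (0:ℝ) • (-G x)) = E x := by simp
        rw [h0, inner_neg_right] at hslope
        have hs : s₀ - 0 ≠ 0 := by
          rw [sub_zero]; exact ne_of_gt hs₀pos
        have hmul : -(inner ℝ (G y) (G x) : ℝ) * (s₀ - 0) = E (x + s₀ • (-G x)) - E x := by
          rw [hslope]; field_simp
        rw [hηx]
        linear_combination (-1 : ℝ) * hmul
      rw [hEeq]
      constructor
      · nlinarith
      · nlinarith
  -- iterate
  set step : ℝ := τ * (δ^2/2) with hstep
  have hstep0 : 0 < step := by positivity
  obtain ⟨N, hN⟩ := exists_nat_ge (ε / step)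
  have hNstep : ε ≤ N * step := by
    rw [div_le_iff₀ hstep0] at hN
    linarith
  have hiter : ∀ x, E x ≤ c + ε/4 → ∀ m : ℕ,
      E (η^[m] x) ≤ max (c - ε/2) (c + ε/4 - m * step) := by
    intro x hx
    intro m
    induction m with
    | zero => simpa using le_max_of_le_right (by simpa using hx)
    | succ m ih =>
      rw [Function.iterate_succ_apply']
      set z := η^[m] x with hz
      rcases le_or_gt (E z) (c - ε/2) with hle | hgt
      · exact le_max_of_le_left (le_trans (hdec z).2 hle)
      · have hzle : E z ≤ c + ε/4 - m * step := by
          rcases max_cases (c - ε/2) (c + ε/4 - m * step) with ⟨heq, hge⟩ | ⟨heq, hlt⟩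
          · rw [heq] at ih; linarith
          · rw [heq] at ih; exact ih
        have hχz : χ (E z) = 1 := hχ1 (E z) (by linarith) (by nlinarith [mul_nonneg (Nat.cast_nonneg m : (0:ℝ) ≤ m) (le_of_lt hstep0)])
        have := (hdec z).1
        rw [hχz] at this
        apply le_max_of_le_right
        push_cast
        nlinarith
  -- endpoints are fixed
  have hηa : η a = a := by
    rw [hη]
    simp only
    rw [hχlow (E a) (by linarith), mul_zero, zero_smul, sub_zero]
  have hηb : η b = b := by
    rw [hη]
    simp only
    rw [hχlow (E b) (by linarith), mul_zero, zero_smul, sub_zero]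
  -- deform an almost optimal path
  obtain ⟨m, hmS, hm⟩ := exists_lt_of_csInf_lt hSne (show c < c + ε/4 by linarith)
  obtain ⟨γ₂, hγ₂P, rfl⟩ := hmS
  set γ' : ℝ → EuclideanSpace ℝ (Fin n) := fun t => η^[N] (γ₂ t) with hγ'
  have hγ'P : γ' ∈ P := by
    refine ⟨(hηcont.iterate N).comp hγ₂P.1, ?_, ?_⟩
    · rw [hγ']
      simp only
      rw [hγ₂P.2.1, Function.iterate_fixed hηa]
    · rw [hγ']
      simp only
      rw [hγ₂P.2.2, Function.iterate_fixed hηb]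
  have hγ'max : maxE γ' ≤ c - ε/2 := by
    apply csSup_le
    · exact ⟨E (γ' 0), ⟨0, ⟨le_rfl, zero_le_one⟩, rfl⟩⟩
    · rintro m ⟨t, ht, rfl⟩
      have h1 : E (γ₂ t) ≤ maxE γ₂ := hub γ₂ hγ₂P.1 t ht
      have h2 := hiter (γ₂ t) (by linarith) N
      have h3 : c + ε/4 - N * step ≤ c - ε/2 := by linarith
      calc (E ∘ γ') t = E (η^[N] (γ₂ t)) := rfl
        _ ≤ max (c - ε/2) (c + ε/4 - N * step) := h2
        _ ≤ c - ε/2 := max_le le_rfl h3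
  have hcγ' : c ≤ maxE γ' := csInf_le hSbdd ⟨γ', hγ'P, rfl⟩
  linarith

end MP

set_option maxHeartbeats 1600000 in
theorem stmt18 (T : ℕ) (hT : 1 ≤ T) (p : ℕ → ℝ) (hp : ∀ k ≤ T + 1, 1 < p k)
    (pm : ℝ) (hpm : IsLeast (p '' Set.Icc 0 (T + 1)) pm)
    (pp : ℝ) (hpp : IsGreatest (p '' Set.Icc 0 (T + 1)) pp)
    (f : ℕ → ℝ → ℝ) (hf : ∀ k, 1 ≤ k → k ≤ T → Continuous (f k))
    (r' s' : ℝ) (hr' : 0 < r') (hrs' : r' < s')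
    (c : ℝ) (hc : 0 < c)
    (hcr : r' < (1 / 2) * (c * pm / ((T:ℝ) + 1)) ^ (1 / pp))
    (hcs : (((T:ℝ) + 1) / 2) * (c * pp) ^ (1 / pm) < s')
    -- (1): limsup_{|t|→∞} F(k,t)/|t|^{p⁻} ≤ 0
    (h1 : ∀ k, 1 ≤ k → k ≤ T → ∀ ε : ℝ, 0 < ε → ∃ K > (0:ℝ), ∀ t : ℝ, K < |t| →
      Fint f k t ≤ ε * |t| ^ pm)
    -- (2): Σ_k sup_{|t|≤s′} F(k,t) < Σ_k sup_{t∈ℝ} F(k,t)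
    (h2 : ∃ t : ℕ → ℝ, ∑ k ∈ Finset.Icc 1 T, supFle f k s' <
      ∑ k ∈ Finset.Icc 1 T, Fint f k (t k))
    -- (3): sup_{r′≤|t|≤s′} F(k,t) ≤ −Σ_{h≠k} sup_{|t|≤s′} F(h,t)
    (h3 : ∀ k, 1 ≤ k → k ≤ T →
      supFbetween f k r' s' ≤ -∑ j ∈ (Finset.Icc 1 T).erase k, supFle f j s') :
    ∃ lamStar > (0:ℝ), ∃ u₁ u₂ u₃ : ℕ → ℝ,
      IsCriticalPoint T p f lamStar u₁ ∧ IsCriticalPoint T p f lamStar u₂ ∧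
      IsCriticalPoint T p f lamStar u₃ ∧
      DistinctH T u₁ u₂ ∧ DistinctH T u₁ u₃ ∧ DistinctH T u₂ u₃ ∧
      NonzeroH T u₂ ∧ NonzeroH T u₃ := by
    classical
  have hT0 : 0 < T := hT
  have hpm1 : 1 < pm := by
    obtain ⟨k, hk, hkpm⟩ := hpm.1
    rw [← hkpm]
    exact hp k (by simpa using hk.2)
  have hpmle : ∀ j ≤ T + 1, pm ≤ p j := fun j hj => hpm.2 ⟨j, ⟨Nat.zero_le j, hj⟩, rfl⟩
  have hple : ∀ j ≤ T + 1, p j ≤ pp := fun j hj => hpp.2 ⟨j, ⟨Nat.zero_le j, hj⟩, rfl⟩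
  have hpp1 : 1 < pp := lt_of_lt_of_le hpm1 (le_trans (hpmle 0 (by omega)) (hple 0 (by omega)))
  have hs'0 : 0 < s' := lt_trans hr' hrs'
  have hFcont : ∀ k, 1 ≤ k → k ≤ T → Continuous (Fint f k) :=
    fun k h1k h2k => Fint_continuous (hf k h1k h2k)
  -- bound by supFle
  have hsupFle_bdd : ∀ k, 1 ≤ k → k ≤ T → ∀ t : ℝ, |t| ≤ s' → Fint f k t ≤ supFle f k s' := by
    intro k h1k h2k t ht
    have hset : {y : ℝ | ∃ t : ℝ, |t| ≤ s' ∧ y = Fint f k t} = Fint f k '' Set.Icc (-s') s' := by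
      ext y
      constructor
      · rintro ⟨t', ht', rfl⟩
        exact ⟨t', abs_le.mp ht', rfl⟩
      · rintro ⟨t', ht', rfl⟩
        exact ⟨t', abs_le.mpr ht', rfl⟩
    unfold supFle
    apply le_csSup
    · rw [hset]
      exact (isCompact_Icc.image (hFcont k h1k h2k)).bddAbove
    · exact ⟨t, ht, rfl⟩
  have hsupFle_nonneg : ∀ k, 1 ≤ k → k ≤ T → 0 ≤ supFle f k s' := by
    intro k h1k h2k
    have h := hsupFle_bdd k h1k h2k 0 (by simpa using le_of_lt hs'0)
    rwa [Fint_zero] at h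
  -- bound by supFbetween
  have hsupFb_bdd : ∀ k, 1 ≤ k → k ≤ T → ∀ t : ℝ, r' ≤ |t| → |t| ≤ s' →
      Fint f k t ≤ supFbetween f k r' s' := by
    intro k h1k h2k t h1t h2t
    have hset : {y : ℝ | ∃ t : ℝ, r' ≤ |t| ∧ |t| ≤ s' ∧ y = Fint f k t}
        = Fint f k '' (Set.Icc (-s') (-r') ∪ Set.Icc r' s') := by
      ext y
      constructor
      · rintro ⟨t', h1', h2', rfl⟩
        refine ⟨t', ?_, rfl⟩
        rcases le_or_gt 0 t' with h | h
        · right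
          rw [abs_of_nonneg h] at h1' h2'
          exact ⟨h1', h2'⟩
        · left
          rw [abs_of_neg h] at h1' h2'
          constructor <;> linarith
      · rintro ⟨t', ht', rfl⟩
        refine ⟨t', ?_, ?_, rfl⟩
        · rcases ht' with ⟨ha, hb⟩ | ⟨ha, hb⟩
          · rw [abs_of_neg (by linarith : t' < 0)]
            linarith
          · rw [abs_of_nonneg (by linarith : (0:ℝ) ≤ t')]
            linarith
        · rcases ht' with ⟨ha, hb⟩ | ⟨ha, hb⟩
          · rw [abs_of_neg (by linarith : t' < 0)]
            linarith
          · rw [abs_of_nonneg (by linarith : (0:ℝ) ≤ t')]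
            linarith
    unfold supFbetween
    apply le_csSup
    · rw [hset]
      exact ((isCompact_Icc.union isCompact_Icc).image (hFcont k h1k h2k)).bddAbove
    · exact ⟨t, h1t, h2t, rfl⟩
  -- the annulus estimate
  have hannulus : ∀ x : EuclideanSpace ℝ (Fin T), r' ≤ MX hT x → MX hT x ≤ s' →
      sF T f x ≤ 0 := by
    intro x hxr hxs
    rw [sF_eq_Icc]
    obtain ⟨i₀, hi₀⟩ := MX_exists_coord hT x
    set k₀ := (i₀ : ℕ) + 1 with hk₀
    have hk₀1 : 1 ≤ k₀ := by omega
    have hk₀T : k₀ ≤ T := by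
      have := i₀.isLt
      omega
    have hk₀mem : k₀ ∈ Finset.Icc 1 T := Finset.mem_Icc.mpr ⟨hk₀1, hk₀T⟩
    have hxk₀ : extH T x k₀ = x i₀ := extH_coord x i₀
    have hFk₀ : Fint f k₀ (extH T x k₀) ≤ supFbetween f k₀ r' s' := by
      apply hsupFb_bdd k₀ hk₀1 hk₀T
      · rw [hxk₀, ← hi₀]; exact hxr
      · rw [hxk₀, ← hi₀]; exact hxs
    have herase : ∑ j ∈ (Finset.Icc 1 T).erase k₀, Fint f j (extH T x j)
        ≤ ∑ j ∈ (Finset.Icc 1 T).erase k₀, supFle f j s' := by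
      apply Finset.sum_le_sum
      intro j hj
      have hjmem := Finset.mem_of_mem_erase hj
      simp only [Finset.mem_Icc] at hjmem
      exact hsupFle_bdd j hjmem.1 hjmem.2 _ (le_trans (abs_extH_le_MX hT x j) hxs)
    have h3' := h3 k₀ hk₀1 hk₀T
    have hsplit := Finset.sum_erase_add (Finset.Icc 1 T) (fun k => Fint f k (extH T x k)) hk₀mem
    rw [← hsplit]
    linarith
  -- coercivity
  have hcoer : ∀ lam : ℝ, 0 < lam → ∀ A : ℝ, ∃ R : ℝ,
      ∀ x : EuclideanSpace ℝ (Fin T), EE T p f lam x ≤ A → ‖x‖ ≤ R := by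
    intro lam hlam A
    set a₀ : ℝ := (1 / pp) * ((1 / ((T:ℝ) + 1)) ^ pm) with ha₀
    have ha₀0 : 0 < a₀ := by
      have h := Real.rpow_pos_of_pos (show (0:ℝ) < 1 / ((T:ℝ)+1) by positivity) pm
      positivity
    have hT' : (0:ℝ) < T := by exact_mod_cast hT0
    set ε := a₀ / (2 * lam * T) with hεdef
    have hε0 : 0 < ε := by positivity
    have hCex : ∀ k : ℕ, ∃ C : ℝ, 0 ≤ C ∧
        (1 ≤ k → k ≤ T → ∀ t : ℝ, Fint f k t ≤ ε * |t| ^ pm + C) := by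
      intro k
      by_cases hk : 1 ≤ k ∧ k ≤ T
      · obtain ⟨K, hK0, hKb⟩ := h1 k hk.1 hk.2 ε hε0
        have hIcc : (Set.Icc (-K) K).Nonempty := ⟨0, by constructor <;> linarith⟩
        obtain ⟨t₀, ht₀mem, ht₀max⟩ := isCompact_Icc.exists_isMaxOn hIcc
          ((hFcont k hk.1 hk.2).continuousOn)
        refine ⟨max (Fint f k t₀) 0, le_max_right _ _, fun _ _ t => ?_⟩
        rcases le_or_gt |t| K with h | h
        · have hmem : t ∈ Set.Icc (-K) K := ⟨(abs_le.mp h).1, (abs_le.mp h).2⟩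
          have h2 : Fint f k t ≤ Fint f k t₀ := (isMaxOn_iff.mp ht₀max) t hmem
          have h3'' : (0:ℝ) ≤ ε * |t| ^ pm := by positivity
          have h4 : Fint f k t₀ ≤ max (Fint f k t₀) 0 := le_max_left _ _
          linarith
        · have h5 := hKb t h
          have h4 : (0:ℝ) ≤ max (Fint f k t₀) 0 := le_max_right _ _
          linarith
      · exact ⟨0, le_rfl, fun h1k h2k => absurd ⟨h1k, h2k⟩ hk⟩
    choose C hC0 hCb using hCex
    set Cs := ∑ k ∈ Finset.Icc 1 T, C k with hCs
    have hCs0 : 0 ≤ Cs := Finset.sum_nonneg fun k _ => hC0 k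
    have hgrow : ∀ x : EuclideanSpace ℝ (Fin T), (T:ℝ) + 1 ≤ MX hT x →
        (a₀ / 2) * (MX hT x) ^ pm - lam * Cs ≤ EE T p f lam x := by
      intro x hx
      have h1g := muE_growth p hp hT pm pp hpm1 hpmle hple x hx
      have hMpos : (0:ℝ) < MX hT x := by
        have : (0:ℝ) < (T:ℝ)+1 := by positivity
        linarith
      have hsF : sF T f x ≤ ε * T * (MX hT x) ^ pm + Cs := by
        rw [sF_eq_Icc]
        have hbd : ∀ k ∈ Finset.Icc 1 T, Fint f k (extH T x k) ≤ ε * (MX hT x) ^ pm + C k := by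
          intro k hk
          simp only [Finset.mem_Icc] at hk
          have h5 := hCb k hk.1 hk.2 (extH T x k)
          have h6 : |extH T x k| ^ pm ≤ (MX hT x) ^ pm :=
            Real.rpow_le_rpow (abs_nonneg _) (abs_extH_le_MX hT x k) (by linarith)
          have h7 : ε * |extH T x k| ^ pm ≤ ε * (MX hT x) ^ pm :=
            mul_le_mul_of_nonneg_left h6 (le_of_lt hε0)
          linarith
        calc ∑ k ∈ Finset.Icc 1 T, Fint f k (extH T x k)
            ≤ ∑ k ∈ Finset.Icc 1 T, (ε * (MX hT x) ^ pm + C k) := Finset.sum_le_sum hbd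
          _ = (T : ℝ) * (ε * (MX hT x) ^ pm) + Cs := by
              rw [Finset.sum_add_distrib, Finset.sum_const, Nat.card_Icc]
              simp [hCs]
          _ = ε * (T:ℝ) * (MX hT x) ^ pm + Cs := by ring
      have hεlam : lam * (ε * (T:ℝ)) = a₀ / 2 := by
        rw [hεdef]
        field_simp
      have hkey : lam * (ε * (T:ℝ) * (MX hT x) ^ pm + Cs)
          = (a₀/2) * (MX hT x) ^ pm + lam * Cs := by
        have h9 : lam * (ε * (T:ℝ) * (MX hT x) ^ pm) = (a₀/2) * (MX hT x) ^ pm := by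
          rw [← hεlam]; ring
        rw [mul_add, h9]
      have hlamsF : lam * sF T f x ≤ (a₀/2) * (MX hT x) ^ pm + lam * Cs := by
        rw [← hkey]
        exact mul_le_mul_of_nonneg_left hsF (le_of_lt hlam)
      rw [EE_eq]
      have h10 : a₀ * (MX hT x) ^ pm ≤ muE T p x := by
        calc a₀ * (MX hT x)^pm = (1/pp) * ((1/((T:ℝ)+1))^pm) * (MX hT x)^pm := by rw [ha₀]
          _ ≤ muE T p x := h1g
      linarith
    set Rm : ℝ := max ((T:ℝ) + 1) ((2 * (|A| + lam * Cs + 1) / a₀) ^ (1/pm)) with hRm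
    refine ⟨Real.sqrt T * Rm, ?_⟩
    intro x hEx
    have hMX : MX hT x ≤ Rm := by
      by_contra hMgt
      push_neg at hMgt
      have h8 : (T:ℝ) + 1 ≤ MX hT x := le_trans (le_max_left _ _) (le_of_lt hMgt)
      have h9 := hgrow x h8
      have hbase : (0:ℝ) ≤ 2 * (|A| + lam * Cs + 1) / a₀ := by positivity
      have h11 : 2 * (|A| + lam * Cs + 1) / a₀ ≤ (MX hT x) ^ pm := by
        have h12 : ((2 * (|A| + lam * Cs + 1) / a₀) ^ (1/pm)) ^ pm ≤ (MX hT x) ^ pm := by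
          apply Real.rpow_le_rpow (Real.rpow_nonneg hbase _) _ (by linarith)
          exact le_trans (le_max_right _ _) (le_of_lt hMgt)
        rwa [one_div, Real.rpow_inv_rpow hbase (by linarith : pm ≠ 0)] at h12
      have h13 : |A| + lam * Cs + 1 ≤ (a₀/2) * (MX hT x) ^ pm := by
        have h14 := mul_le_mul_of_nonneg_left h11 (show (0:ℝ) ≤ a₀/2 by positivity)
        have h15 : (a₀/2) * (2 * (|A| + lam * Cs + 1) / a₀) = |A| + lam * Cs + 1 := by
          field_simp
        linarith
      have h16 : A ≤ |A| := le_abs_self A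
      linarith
    calc ‖x‖ ≤ Real.sqrt T * MX hT x := norm_le_sqrt_MX hT x
      _ ≤ Real.sqrt T * Rm := mul_le_mul_of_nonneg_left hMX (Real.sqrt_nonneg _)
    -- choice of the parameter lamStar
  obtain ⟨tw, htw⟩ := h2
  set S0 := ∑ k ∈ Finset.Icc 1 T, supFle f k s' with hS0
  have hS0nonneg : 0 ≤ S0 := Finset.sum_nonneg fun k hk => by
    simp only [Finset.mem_Icc] at hk
    exact hsupFle_nonneg k hk.1 hk.2
  set FW := ∑ k ∈ Finset.Icc 1 T, Fint f k (tw k) with hFW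
  have hD : 0 < FW - S0 := by rw [hFW, hS0]; linarith [htw]
  set xw : EuclideanSpace ℝ (Fin T) :=
    (WithLp.equiv 2 (Fin T → ℝ)).symm (fun i => tw ((i:ℕ)+1)) with hxw
  have hxwcoord : ∀ k, 1 ≤ k → k ≤ T → extH T xw k = tw k := by
    intro k h1k h2k
    unfold extH
    rw [dif_pos ⟨h1k, h2k⟩, hxw, WithLp.equiv_symm_apply, PiLp.toLp_apply]
    congr 1
    simp only [Fin.val_mk]
    omega
  set lam := (muE T p xw + 1) / (FW - S0) with hlamdef
  have hmuEw := muE_nonneg p hp xw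
  have hlam0 : 0 < lam := div_pos (by linarith) hD
  have hsFw : sF T f xw = FW := by
    rw [sF_eq_Icc, hFW]
    apply Finset.sum_congr rfl
    intro k hk
    simp only [Finset.mem_Icc] at hk
    rw [hxwcoord k hk.1 hk.2]
  have hEEw : EE T p f lam xw = -(lam * S0) - 1 := by
    rw [EE_eq, hsFw]
    have h17 : lam * (FW - S0) = muE T p xw + 1 := div_mul_cancel₀ _ (ne_of_gt hD)
    linear_combination -h17
  have hball_lb : ∀ x : EuclideanSpace ℝ (Fin T), MX hT x ≤ s' →
      -(lam * S0) ≤ EE T p f lam x := by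
    intro x hx
    rw [EE_eq]
    have hsFle : sF T f x ≤ S0 := by
      rw [sF_eq_Icc, hS0]
      apply Finset.sum_le_sum
      intro k hk
      simp only [Finset.mem_Icc] at hk
      exact hsupFle_bdd k hk.1 hk.2 _ (le_trans (abs_extH_le_MX hT x k) hx)
    have h18 := muE_nonneg p hp x
    nlinarith [mul_le_mul_of_nonneg_left hsFle (le_of_lt hlam0)]
  have hann_pos : ∀ x : EuclideanSpace ℝ (Fin T), r' ≤ MX hT x → MX hT x ≤ s' →
      0 < EE T p f lam x := by
    intro x h1x h2x
    rw [EE_eq]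
    have h19 := hannulus x h1x h2x
    have h20 := muE_pos p hp hT x (lt_of_lt_of_le hr' h1x)
    nlinarith
  have EEcont : Continuous (EE T p f lam) := EE_continuous T p hp f hf lam
  have Hder := fun x v t => EE_hasDerivAt T p hp f hf lam x v t
  -- minimiser on the ball
  set Bs : Set (EuclideanSpace ℝ (Fin T)) := {x | MX hT x ≤ s'} with hBs
  have hBsclosed : IsClosed Bs := isClosed_le (MX_continuous hT) continuous_const
  have hBsne : Bs.Nonempty := ⟨0, by rw [hBs, Set.mem_setOf_eq, MX_zero]; exact le_of_lt hs'0⟩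
  obtain ⟨x₁, hx₁Bs, hx₁min⟩ := exists_min_on_closed EEcont (hcoer lam hlam0) hBsclosed hBsne
  have hEE0 : EE T p f lam (0:EuclideanSpace ℝ (Fin T)) = 0 := EE_zero p hp f lam
  have hx₁le0 : EE T p f lam x₁ ≤ 0 := by
    have h21 := hx₁min 0 (by rw [hBs, Set.mem_setOf_eq, MX_zero]; exact le_of_lt hs'0)
    rwa [hEE0] at h21
  have hx₁r' : MX hT x₁ < r' := by
    by_contra hge
    push_neg at hge
    exact absurd hx₁le0 (not_le.mpr (hann_pos x₁ hge hx₁Bs))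
  have hx₁loc : IsLocalMin (EE T p f lam) x₁ := by
    have hopen : IsOpen {x : EuclideanSpace ℝ (Fin T) | MX hT x < r'} :=
      isOpen_lt (MX_continuous hT) continuous_const
    unfold IsLocalMin IsMinFilter
    filter_upwards [hopen.mem_nhds hx₁r'] with y hy
    exact hx₁min y (by rw [hBs, Set.mem_setOf_eq]; exact le_of_lt (lt_trans hy hrs'))
  have hG₁ : GG T p f lam x₁ = 0 := grad_zero_of_isLocalMin Hder hx₁loc
  -- global minimiser
  obtain ⟨x₂, -, hx₂min⟩ := exists_min_on_closed EEcont (hcoer lam hlam0) isClosed_univ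
    ⟨0, Set.mem_univ 0⟩
  have hx₂xw : EE T p f lam x₂ ≤ -(lam * S0) - 1 := by
    have h22 := hx₂min xw (Set.mem_univ xw)
    rwa [hEEw] at h22
  have hx₂s' : s' < MX hT x₂ := by
    by_contra hle
    push_neg at hle
    have := hball_lb x₂ hle
    linarith
  have hx₂loc : IsLocalMin (EE T p f lam) x₂ := by
    unfold IsLocalMin IsMinFilter
    filter_upwards [Filter.univ_mem] with y _
    exact hx₂min y (Set.mem_univ y)
  have hG₂ : GG T p f lam x₂ = 0 := grad_zero_of_isLocalMin Hder hx₂loc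
  -- the barrier
  set An : Set (EuclideanSpace ℝ (Fin T)) := {x | r' ≤ MX hT x ∧ MX hT x ≤ s'} with hAn
  have hAnclosed : IsClosed An := by
    have h23 : An = {x | r' ≤ MX hT x} ∩ {x | MX hT x ≤ s'} := rfl
    rw [h23]
    exact (isClosed_le continuous_const (MX_continuous hT)).inter
      (isClosed_le (MX_continuous hT) continuous_const)
  have hAnc : IsCompact An := by
    apply IsCompact.of_isClosed_subset (isCompact_closedBall (0:EuclideanSpace ℝ (Fin T))
      (Real.sqrt T * s')) hAnclosed
    intro x hx
    simp only [Metric.mem_closedBall, dist_zero_right]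
    calc ‖x‖ ≤ Real.sqrt T * MX hT x := norm_le_sqrt_MX hT x
      _ ≤ Real.sqrt T * s' := mul_le_mul_of_nonneg_left hx.2 (Real.sqrt_nonneg _)
  have hAnne : An.Nonempty := by
    set xc : EuclideanSpace ℝ (Fin T) := (WithLp.equiv 2 (Fin T → ℝ)).symm (fun _ => r') with hxc
    have hMXc : MX hT xc = r' := by
      apply le_antisymm
      · rw [MX_le_iff]
        intro i
        rw [hxc, WithLp.equiv_symm_apply, PiLp.toLp_apply, abs_of_pos hr']
      · have h24 := coord_le_MX hT xc ⟨0, hT⟩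
        rw [hxc, WithLp.equiv_symm_apply, PiLp.toLp_apply, abs_of_pos hr'] at h24
        exact h24
    exact ⟨xc, by rw [hAn, Set.mem_setOf_eq, hMXc]; exact ⟨le_rfl, le_of_lt hrs'⟩⟩
  obtain ⟨xβ, hxβAn, hxβmin⟩ := hAnc.exists_isMinOn hAnne EEcont.continuousOn
  set β := EE T p f lam xβ with hβdef
  have hβ0 : 0 < β := hann_pos xβ hxβAn.1 hxβAn.2
  have hsep : ∀ γ : ℝ → EuclideanSpace ℝ (Fin T), Continuous γ → γ 0 = x₁ → γ 1 = x₂ →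
      ∃ t ∈ Set.Icc (0:ℝ) 1, β ≤ EE T p f lam (γ t) := by
    intro γ hγ hγ0 hγ1
    have hMcont : ContinuousOn (fun t => MX hT (γ t)) (Set.Icc 0 1) :=
      ((MX_continuous hT).comp hγ).continuousOn
    have hmem : r' ∈ Set.Icc ((fun t => MX hT (γ t)) 0) ((fun t => MX hT (γ t)) 1) := by
      simp only [hγ0, hγ1]
      exact ⟨le_of_lt hx₁r', le_of_lt (lt_trans hrs' hx₂s')⟩
    obtain ⟨t, ht, hteq⟩ := intermediate_value_Icc (by norm_num : (0:ℝ) ≤ 1) hMcont hmem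
    have hteq' : MX hT (γ t) = r' := hteq
    refine ⟨t, ht, ?_⟩
    apply (isMinOn_iff.mp hxβmin)
    rw [hAn, Set.mem_setOf_eq, hteq']
    exact ⟨le_rfl, le_of_lt hrs'⟩
  have hEEx₂0 : EE T p f lam x₂ ≤ 0 := by nlinarith [mul_nonneg (le_of_lt hlam0) hS0nonneg]
  obtain ⟨x₃, hG₃, hx₃pos⟩ := mountain_pass (EE T p f lam) (GG T p f lam) EEcont
    (GG_continuous T p hp f hf lam) Hder (hcoer lam hlam0) x₁ x₂ hx₁le0 hEEx₂0 β hβ0 hsep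
  -- distinctness helper
  have hdist : ∀ x y : EuclideanSpace ℝ (Fin T),
      EE T p f lam x ≠ EE T p f lam y → DistinctH T (extH T x) (extH T y) := by
    intro x y hne
    by_contra hd
    unfold DistinctH at hd
    push_neg at hd
    have hxy : x = y := by
      ext i
      have h25 := hd ((i:ℕ)+1) (by omega) (Nat.succ_le_of_lt i.isLt)
      rwa [extH_coord, extH_coord] at h25
    rw [hxy] at hne
    exact hne rfl
  have hlb₁ : -(lam * S0) ≤ EE T p f lam x₁ := hball_lb x₁ hx₁Bs
  refine ⟨lam, hlam0, extH T x₁, extH T x₂, extH T x₃,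
    isCriticalPoint_of_GG_eq_zero T hG₁, isCriticalPoint_of_GG_eq_zero T hG₂,
    isCriticalPoint_of_GG_eq_zero T hG₃, ?_, ?_, ?_, ?_, ?_⟩
  · exact hdist x₁ x₂ (ne_of_gt (show EE T p f lam x₂ < EE T p f lam x₁ by linarith))
  · exact hdist x₁ x₃ (ne_of_lt (show EE T p f lam x₁ < EE T p f lam x₃ by linarith))
  · exact hdist x₂ x₃ (ne_of_lt (show EE T p f lam x₂ < EE T p f lam x₃ by linarith))
  · obtain ⟨i₂, hi₂⟩ := MX_exists_coord hT x₂
    refine ⟨(i₂:ℕ)+1, by omega, Nat.succ_le_of_lt i₂.isLt, ?_⟩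
    rw [extH_coord]
    intro h0
    rw [h0] at hi₂
    simp only [abs_zero] at hi₂
    linarith
  · have h26 := hdist x₃ 0 (by rw [hEE0]; exact ne_of_gt hx₃pos)
    obtain ⟨k, h1k, h2k, hne⟩ := h26
    exact ⟨k, h1k, h2k, by rwa [extH_smul_zero] at hne⟩
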